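/- Let p be a prime and n ≥ 1 with p^n ≡ 2 (mod 3), and let d = (2·p^n - 1)/3. Then gcd(d, p^n - 1) = 1, and for every c ≠ 1 in GF(p^n) and every b ∈ GF(p^n), the equation (x+1)^d - c·x^d = b has at most 3 solutions x ∈ GF(p^n). Hence the c-differential uniformity of x^d is at most 3. -/

import Mathlib

open Polynomial

def cDelta {F : Type*} [Field F] [Fintype F] [DecidableEq F]
    (f : F → F) (c a b : F) : ℕ :=
  (Finset.univ.filter (fun x : F => f (x + a) - c * f x = b)).card

def cUnif {F : Type*} [Field F] [Fintype F] [DecidableEq F]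
    (f : F → F) (c : F) : ℕ :=
  Finset.univ.sup fun a : F => Finset.univ.sup fun b : F => cDelta f c a b

theorem stmt9 {F : Type*} [Field F] [Fintype F] [DecidableEq F]
    (p n : ℕ) (hp : p.Prime) (hn : 1 ≤ n) (hmod : p ^ n % 3 = 2)
    (hcard : Fintype.card F = p ^ n) :
    Nat.gcd ((2 * p ^ n - 1) / 3) (p ^ n - 1) = 1 ∧
    ∀ c : F, c ≠ 1 →
      (∀ b : F,
        (Finset.univ.filter
          (fun x : F => (x + 1) ^ ((2 * p ^ n - 1) / 3) -
            c * x ^ ((2 * p ^ n - 1) / 3) = b)).card ≤ 3) ∧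
      cUnif (fun x : F => x ^ ((2 * p ^ n - 1) / 3)) c ≤ 3 := by
  classical
  have hq2 : 2 ≤ p ^ n := hcard ▸ Fintype.one_lt_card
  set q := p ^ n with hq
  set d := (2 * q - 1) / 3 with hd
  have h3d : 3 * d = 2 * (q - 1) + 1 := by omega
  have hpow : ∀ x : F, x ^ (3 * d) = x := by
    intro x
    by_cases hx : x = 0
    · subst hx; rw [zero_pow]; omega
    · rw [h3d, pow_succ, mul_comm 2 (q-1), pow_mul, ← hcard, FiniteField.pow_card_sub_one_eq_one x hx,
        one_pow, one_mul]
  have hcube : ∀ x : F, (x ^ d) ^ 3 = x := fun x => by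
    rw [← pow_mul, mul_comm, hpow]
  have hcube' : ∀ x : F, (x ^ 3) ^ d = x := fun x => by
    rw [← pow_mul, hpow]
  have hdinj : Function.Injective (fun x : F => x ^ d) :=
    Function.LeftInverse.injective (g := fun x : F => x ^ 3) hcube
  have hgcd : Nat.gcd d (q - 1) = 1 := by
    have h1 : Nat.gcd d (q - 1) ∣ 3 * d := Dvd.dvd.mul_left (Nat.gcd_dvd_left _ _) 3
    have h2 : Nat.gcd d (q - 1) ∣ 2 * (q - 1) := Dvd.dvd.mul_left (Nat.gcd_dvd_right _ _) 2
    have h3 := Nat.dvd_sub h1 h2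
    have h4 : 3 * d - 2 * (q - 1) = 1 := by omega
    rw [h4] at h3
    exact Nat.dvd_one.mp h3
  have hc3 : ∀ c : F, c ≠ 1 → c ^ 3 ≠ 1 := by
    intro c hc h
    apply hc
    have := congrArg (fun y : F => y ^ d) h
    simpa [hcube'] using this
  have key : ∀ c : F, c ≠ 1 → ∀ b : F,
      (Finset.univ.filter (fun x : F => (x + 1) ^ d - c * x ^ d = b)).card ≤ 3 := by
    intro c hc b
    set P : F[X] := C (c ^ 3 - 1) * X ^ 3 + C (3 * c ^ 2 * b) * X ^ 2
      + C (3 * c * b ^ 2) * X + C (b ^ 3 - 1) with hP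
    have hPc3 : P.coeff 3 = c ^ 3 - 1 := by
      simp only [hP, coeff_add, coeff_C_mul, coeff_X_pow, coeff_X, coeff_C]; norm_num
    have hPne : P ≠ 0 := by
      intro h
      rw [h, coeff_zero] at hPc3
      exact hc3 c hc (by linear_combination -hPc3)
    have hdeg : P.natDegree ≤ 3 := by
      rw [hP]; compute_degree
    have hroots : P.roots.toFinset.card ≤ 3 :=
      le_trans (Multiset.toFinset_card_le _) (le_trans (Polynomial.card_roots' P) hdeg)
    refine le_trans (Finset.card_le_card_of_injOn (fun x => x ^ d) ?_ ?_) hroots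
    · intro x hx
      simp only [Finset.mem_coe, Finset.mem_filter, Finset.mem_univ, true_and] at hx
      rw [Finset.mem_coe, Multiset.mem_toFinset, mem_roots hPne]
      have hb : (x + 1) ^ d = b + c * x ^ d := by linear_combination hx
      have h1 : (b + c * x ^ d) ^ 3 = x + 1 := by rw [← hb]; exact hcube _
      have h2 : (x ^ d) ^ 3 = x := hcube x
      simp only [IsRoot, hP, eval_add, eval_mul, eval_C, eval_pow, eval_X]
      linear_combination h1 - h2
    · exact fun x _ y _ h => hdinj h
  refine ⟨hgcd, fun c hc => ⟨key c hc, ?_⟩⟩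
  unfold cUnif cDelta
  apply Finset.sup_le
  intro a _
  apply Finset.sup_le
  intro b _
  by_cases ha : a = 0
  · subst ha
    refine le_trans (Finset.card_le_one.mpr ?_) (by norm_num)
    intro x hx y hy
    simp only [Finset.mem_filter, Finset.mem_univ, true_and, add_zero] at hx hy
    have h1c : (1 : F) - c ≠ 0 := sub_ne_zero.mpr fun h => hc h.symm
    have hxy : (1 - c) * x ^ d = (1 - c) * y ^ d := by linear_combination hx - hy
    exact hdinj (mul_left_cancel₀ h1c hxy)
  · have hane : (a : F) ^ d ≠ 0 := pow_ne_zero _ ha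
    refine le_trans (Finset.card_le_card_of_injOn (fun x => x * a⁻¹) ?_ ?_)
      (key c hc (b * (a ^ d)⁻¹))
    · intro x hx
      simp only [Finset.mem_coe, Finset.mem_filter, Finset.mem_univ, true_and] at hx ⊢
      have e1 : x * a⁻¹ + 1 = (x + a) * a⁻¹ := by field_simp
      rw [e1, mul_pow, mul_pow, ← inv_pow]
      linear_combination (a ^ d)⁻¹ * hx
    · intro x _ y _ h
      exact mul_right_cancel₀ (inv_ne_zero ha) h
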